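/- Let E be a real normed vector space, λ : E → (E →L[ℝ] ℝ) a 1-form, and φ : ℝ × E → E a differentiable map such that each φ_θ := φ(θ, ·) preserves λ, i.e. λ_{φ(θ,q)}((D_q φ_θ)(v)) = λ_q(v) for all θ ∈ ℝ, q, v ∈ E. Define h : ℝ × E → ℝ by h(θ,q) := λ_{φ(θ,q)}(∂_θ φ(θ,q)), where ∂_θ φ is the partial derivative of φ in the ℝ-variable. Define Ψ : E × ℝ × ℝ → E × ℝ × ℝ by Ψ(q,s,θ) := (φ(θ,q), s, θ), and define the 1-form λ^𝒟 on E × ℝ × ℝ by λ^𝒟(p,s,θ)(v,c,d) := λ_p(v) + 2s·d. Then the pullback Ψ*λ^𝒟, given at (q,s,θ) by (v,c,d) ↦ λ^𝒟(Ψ(q,s,θ))((DΨ(q,s,θ))(v,c,d)), equals the 1-form (v,c,d) ↦ λ_q(v) + (2s + h(θ,q))·d. (That is, Ψ*(λ + 2s dθ) = λ + (2s + h_θ) dθ.) -/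

import Mathlib

/-- If each `φ_θ` preserves the 1-form `λ`, then the pullback of
`λ^𝒟 = λ + 2s dθ` under `Ψ(q,s,θ) = (φ(θ,q), s, θ)` is the 1-form `λ + (2s + h_θ) dθ`, where
`h(θ,q) = λ_{φ(θ,q)}(∂_θ φ(θ,q))`. -/
theorem stmt_10 {E : Type*} [NormedAddCommGroup E] [NormedSpace ℝ E]
    (lam : E → (E →L[ℝ] ℝ))
    (φ : ℝ × E → E) (hφ : Differentiable ℝ φ)
    (hpres : ∀ (θ : ℝ) (q v : E),
      lam (φ (θ, q)) (fderiv ℝ (fun x : E => φ (θ, x)) q v) = lam q v)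
    (h : ℝ → E → ℝ)
    (hh : ∀ (θ : ℝ) (q : E),
      h θ q = lam (φ (θ, q)) (fderiv ℝ (fun τ : ℝ => φ (τ, q)) θ 1))
    (Ψ : E × ℝ × ℝ → E × ℝ × ℝ)
    (hΨ : Ψ = fun x : E × ℝ × ℝ => (φ (x.2.2, x.1), x.2.1, x.2.2))
    (lamD : E × ℝ × ℝ → ((E × ℝ × ℝ) →L[ℝ] ℝ))
    (hlamD : ∀ (p : E) (s θ : ℝ) (v : E) (c d : ℝ),
      lamD (p, s, θ) (v, c, d) = lam p v + 2 * s * d) :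
    ∀ (q : E) (s θ : ℝ) (v : E) (c d : ℝ),
      lamD (Ψ (q, s, θ)) (fderiv ℝ Ψ (q, s, θ) (v, c, d))
        = lam q v + (2 * s + h θ q) * d := by
  intro q s θ v c d
  have hD : HasFDerivAt φ (fderiv ℝ φ (θ, q)) (θ, q) := (hφ (θ, q)).hasFDerivAt
  -- partial derivative in E
  have h1 : HasFDerivAt (fun x : E => φ (θ, x))
      ((fderiv ℝ φ (θ, q)).comp (ContinuousLinearMap.inr ℝ ℝ E)) q :=
    hD.comp q (hasFDerivAt_prodMk_right θ q)
  -- partial derivative in ℝ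
  have h2 : HasFDerivAt (fun τ : ℝ => φ (τ, q))
      ((fderiv ℝ φ (θ, q)).comp (ContinuousLinearMap.inl ℝ ℝ E)) θ :=
    hD.comp θ (hasFDerivAt_prodMk_left θ q)
  -- derivative of Ψ
  set L : (E × ℝ × ℝ) →L[ℝ] (ℝ × E) :=
    ((ContinuousLinearMap.snd ℝ ℝ ℝ).comp (ContinuousLinearMap.snd ℝ E (ℝ × ℝ))).prod
      (ContinuousLinearMap.fst ℝ E (ℝ × ℝ)) with hL
  have hLval : L (q, s, θ) = (θ, q) := rfl
  have hΨD : HasFDerivAt Ψ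
      (((fderiv ℝ φ (θ, q)).comp L).prod (ContinuousLinearMap.snd ℝ E (ℝ × ℝ))) (q, s, θ) := by
    rw [hΨ]
    exact (hD.comp (q, s, θ) (L.hasFDerivAt)).prodMk
      ((ContinuousLinearMap.snd ℝ E (ℝ × ℝ)).hasFDerivAt)
  rw [hΨD.fderiv, hΨ]
  simp only [ContinuousLinearMap.prod_apply, ContinuousLinearMap.comp_apply]
  have hLvd : L (v, c, d) = (d, v) := rfl
  rw [hLvd]
  have hsnd : (ContinuousLinearMap.snd ℝ E (ℝ × ℝ)) (v, c, d) = (c, d) := rfl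
  rw [hsnd]
  have := hlamD (φ (θ, q)) s θ (fderiv ℝ φ (θ, q) (d, v)) c d
  simp only [this]
  have hsplit : (d, v) = d • ((1 : ℝ), (0 : E)) + ((0 : ℝ), v) := by
    simp [Prod.ext_iff]
  rw [hsplit, map_add, map_smul, (lam (φ (θ, q))).map_add, (lam (φ (θ, q))).map_smul]
  have e1 : fderiv ℝ φ (θ, q) ((0 : ℝ), v)
      = fderiv ℝ (fun x : E => φ (θ, x)) q v := by
    rw [h1.fderiv]; rfl
  have e2 : fderiv ℝ φ (θ, q) ((1 : ℝ), (0 : E))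
      = fderiv ℝ (fun τ : ℝ => φ (τ, q)) θ 1 := by
    rw [h2.fderiv]; rfl
  rw [e1, e2, ← hh θ q, hpres θ q v]
  simp only [smul_eq_mul]
  ring
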